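/- Let G be a hole-edge-disjoint simple graph, let C be a hole of G, let e = uv be an edge of C, and suppose S_{C,e} ≠ ∅. Then any shortest path among all C-avoiding (u,v)-paths of G has length exactly 2. -/

import Mathlib

open SimpleGraph

universe u

/-- A *hole* of a simple graph: an induced (chordless) cycle of length at least 4. -/
def IsHole {V : Type u} (G : SimpleGraph V) {v : V} (c : G.Walk v v) : Prop :=
  c.IsCycle ∧ 4 ≤ c.length ∧
    ∀ x ∈ c.support, ∀ y ∈ c.support, G.Adj x y → s(x, y) ∈ c.edges

/-- A graph is *chordal* if it has no hole. -/
def Chordal {V : Type u} (G : SimpleGraph V) : Prop :=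
  ∀ (v : V) (c : G.Walk v v), ¬ IsHole G c

/-- A graph is *hole-edge-disjoint* if any two of its holes either have the same edge set
or share no edge. -/
def HoleEdgeDisjoint {V : Type u} (G : SimpleGraph V) : Prop :=
  ∀ (u v : V) (c₁ : G.Walk u u) (c₂ : G.Walk v v), IsHole G c₁ → IsHole G c₂ →
    ({e | e ∈ c₁.edges} = {e | e ∈ c₂.edges} ∨ ∀ e ∈ c₁.edges, e ∉ c₂.edges)

/-- The complete tripartite graph `K_{2,2,2}`. -/
def K222 : SimpleGraph (Fin 3 × Fin 2) where
  Adj a b := a.1 ≠ b.1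
  symm := ⟨fun _ _ h => Ne.symm h⟩
  loopless := ⟨fun _ h => h rfl⟩

/-- A graph is `K_{2,2,2}`-free if it has no induced subgraph isomorphic to `K_{2,2,2}`. -/
def K222Free {V : Type u} (G : SimpleGraph V) : Prop :=
  ¬ ∃ f : Fin 3 × Fin 2 → V, Function.Injective f ∧
      ∀ a b, G.Adj (f a) (f b) ↔ K222.Adj a b

/-- `X_C`: the set of vertices adjacent to every vertex of the hole `C`. -/
def holeNbrs {V : Type u} (G : SimpleGraph V) {v : V} (c : G.Walk v v) : Set V :=
  {x | ∀ y ∈ c.support, G.Adj x y}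

/-- `V(C) ∪ X_C`. -/
def avoidSet {V : Type u} (G : SimpleGraph V) {v : V} (c : G.Walk v v) : Set V :=
  {x | x ∈ c.support} ∪ holeNbrs G c

/-- A `C`-avoiding path: a path none of whose internal vertices lie in `V(C) ∪ X_C`,
and, if it has length 1, at least one of its two vertices is not in `V(C) ∪ X_C`. -/
def IsCAvoidingPath {V : Type u} (G : SimpleGraph V) {v : V} (c : G.Walk v v)
    {a b : V} (W : G.Walk a b) : Prop :=
  W.IsPath ∧
    (∀ x ∈ W.support, x ≠ a → x ≠ b → x ∉ avoidSet G c) ∧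
    (W.length = 1 → a ∉ avoidSet G c ∨ b ∉ avoidSet G c)

/-- `S_{C,e}` for `e = ab`: all internal vertices of `C`-avoiding `(a,b)`-paths. -/
def Sset {V : Type u} (G : SimpleGraph V) {v : V} (c : G.Walk v v) (a b : V) : Set V :=
  {w | ∃ W : G.Walk a b, IsCAvoidingPath G c W ∧ w ∈ W.support ∧ w ≠ a ∧ w ≠ b}

/-- `T_{C,e}` for `e = ab`: all vertices `w` such that `a w b` is a `C`-avoiding path. -/
def Tset {V : Type u} (G : SimpleGraph V) {v : V} (c : G.Walk v v) (a b : V) : Set V :=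
  {w | ∃ (h₁ : G.Adj a w) (h₂ : G.Adj w b),
      IsCAvoidingPath G c (Walk.cons h₁ (Walk.cons h₂ Walk.nil))}

/-- `X_{C,e} = X_C ∪ {a, b}` for `e = ab`. -/
def Xce {V : Type u} (G : SimpleGraph V) {v : V} (c : G.Walk v v) (a b : V) : Set V :=
  holeNbrs G c ∪ {a, b}

/-- The number of connected components of a graph. -/
noncomputable def numComponents {V : Type u} (G : SimpleGraph V) : ℕ :=
  Nat.card G.ConnectedComponent

/-- `X` is a vertex cut of `G` if `G − X` has more connected components than `G`. -/
def IsVertexCut {V : Type u} (G : SimpleGraph V) (X : Set V) : Prop :=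
  numComponents G < numComponents (G.induce Xᶜ)

/-- A clique cut: a vertex cut which is a clique. -/
def IsCliqueCut {V : Type u} (G : SimpleGraph V) (X : Set V) : Prop :=
  G.IsClique X ∧ IsVertexCut G X

/-- `U` is a union of connected components of `G − X`. -/
def IsComponentUnion {V : Type u} (G : SimpleGraph V) (X U : Set V) : Prop :=
  U ⊆ Xᶜ ∧ ∀ a b : ↥(Xᶜ), (G.induce Xᶜ).Reachable a b → ((a : V) ∈ U ↔ (b : V) ∈ U)

/-- A chordal cut: a clique cut `X` such that there is a (nonempty) union `U` of
connected components of `G − X` with `G[U ∪ X]` chordal. -/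
def IsChordalCut {V : Type u} (G : SimpleGraph V) (X : Set V) : Prop :=
  IsCliqueCut G X ∧
    ∃ U : Set V, U.Nonempty ∧ IsComponentUnion G X U ∧ Chordal (G.induce (U ∪ X))

/-- `x` lies in `Q_{C,e}`, the connected component of `G − X_{C,e}` containing
`V(C) \ {a, b}` (for `e = ab`). -/
def InQ {V : Type u} (G : SimpleGraph V) {v : V} (c : G.Walk v v) (a b : V) (x : V) : Prop :=
  ∃ (hx : x ∈ (Xce G c a b)ᶜ) (y : V) (hy : y ∈ (Xce G c a b)ᶜ),
    y ∈ c.support ∧ y ≠ a ∧ y ≠ b ∧ (G.induce (Xce G c a b)ᶜ).Reachable ⟨x, hx⟩ ⟨y, hy⟩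

/-- The vertex set of `U_{C,e}`: the union of the connected components of
`G − X_{C,e}` other than `Q_{C,e}` containing a vertex of `T_{C,e}`. -/
def Uset {V : Type u} (G : SimpleGraph V) {v : V} (c : G.Walk v v) (a b : V) : Set V :=
  {x | ∃ hx : x ∈ (Xce G c a b)ᶜ, ¬ InQ G c a b x ∧
      ∃ (t : V) (ht : t ∈ (Xce G c a b)ᶜ), t ∈ Tset G c a b ∧ ¬ InQ G c a b t ∧
        (G.induce (Xce G c a b)ᶜ).Reachable ⟨x, hx⟩ ⟨t, ht⟩}

/-- `G` has the chordal property: there are a hole `C` and an edge `e` of `C` such that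
`G[V(U_{C,e}) ∪ X_{C,e}]` is chordal. -/
def HasChordalProperty {V : Type u} (G : SimpleGraph V) : Prop :=
  ∃ (v : V) (c : G.Walk v v) (a b : V), IsHole G c ∧ s(a, b) ∈ c.edges ∧
    Chordal (G.induce (Uset G c a b ∪ Xce G c a b))

/-- `h(G)`: the number of holes of `G`, counted by their edge sets. -/
noncomputable def holeCount {V : Type u} (G : SimpleGraph V) : ℕ :=
  Nat.card {s : Set (Sym2 V) // ∃ (v : V) (c : G.Walk v v), IsHole G c ∧ s = {e | e ∈ c.edges}}

/-- `G` together with `k` added isolated vertices. -/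
def addIsolated {V : Type u} (G : SimpleGraph V) (k : ℕ) : SimpleGraph (V ⊕ Fin k) where
  Adj a b := ∃ x y, G.Adj x y ∧ a = Sum.inl x ∧ b = Sum.inl y
  symm := by
    constructor
    rintro a b ⟨x, y, h, rfl, rfl⟩
    exact ⟨y, x, h.symm, rfl, rfl⟩
  loopless := by
    constructor
    rintro a ⟨x, y, h, rfl, hy⟩
    obtain rfl := Sum.inl.inj hy
    exact G.loopless.irrefl x h

/-- A digraph (given by its arc relation) is acyclic: it has no directed closed walk. -/
def IsAcyclicDigraph {α : Type u} (r : α → α → Prop) : Prop :=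
  ∀ x, ¬ Relation.TransGen r x x

/-- `H` is the competition graph of some acyclic digraph: distinct vertices are adjacent
iff they have a common out-neighbour (prey). -/
def IsCompetitionGraphOfAcyclicDigraph {α : Type u} (H : SimpleGraph α) : Prop :=
  ∃ r : α → α → Prop, IsAcyclicDigraph r ∧
    ∀ a b : α, H.Adj a b ↔ a ≠ b ∧ ∃ x, r a x ∧ r b x

/-- The competition number `k(G)`: the least `k` such that `G` together with `k` isolated
vertices is the competition graph of an acyclic digraph. -/
noncomputable def compNumber {V : Type u} (G : SimpleGraph V) : ℕ :=
  sInf {k | IsCompetitionGraphOfAcyclicDigraph (addIsolated G k)}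

section AuxLemmas

variable {V : Type u} {G : SimpleGraph V}

lemma aux_edge_of_length_one {x y : V} (W : G.Walk x y) (h : W.length = 1) :
    s(x, y) ∈ W.edges := by
  cases W with
  | nil => simp at h
  | @cons _ z _ h' W' =>
    have h0 : W'.length = 0 := by simpa using h
    have hz : z = y := SimpleGraph.Walk.eq_of_length_eq_zero h0
    subst hz
    simp

lemma aux_shortcut {v : V} (c : G.Walk v v) {a b x y : V}
    (T : G.Walk a x) (D1 : G.Walk x y) (D2 : G.Walk y b)
    (hP : IsCAvoidingPath G c (T.append (D1.append D2)))
    (hmin : ∀ Q : G.Walk a b, IsCAvoidingPath G c Q →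
      (T.append (D1.append D2)).length ≤ Q.length)
    (hxy : G.Adj x y) :
    s(x, y) ∈ (T.append (D1.append D2)).edges ∨ (x = a ∧ y = b) := by
  by_cases hab : x = a ∧ y = b
  · exact Or.inr hab
  left
  rcases Nat.lt_or_ge D1.length 2 with h2 | h2
  · -- length 0 or 1
    rcases Nat.lt_or_ge D1.length 1 with h1 | h1
    · have h0 : D1.length = 0 := by omega
      exact absurd (SimpleGraph.Walk.eq_of_length_eq_zero h0) hxy.ne
    · have hD1 : D1.length = 1 := by omega
      have : s(x, y) ∈ D1.edges := aux_edge_of_length_one D1 hD1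
      simp only [SimpleGraph.Walk.edges_append, List.mem_append]
      exact Or.inr (Or.inl this)
  · -- build a shorter C-avoiding path, contradiction
    exfalso
    have hPp := hP.1
    have hsupP : (T.append (D1.append D2)).support
        = T.support ++ (D1.support.tail ++ D2.support.tail) := by
      rw [SimpleGraph.Walk.support_append, SimpleGraph.Walk.tail_support_append]
    have hnodP : (T.support ++ (D1.support.tail ++ D2.support.tail)).Nodup := by
      rw [← hsupP]; exact hPp.support_nodup
    rw [List.nodup_append] at hnodP
    obtain ⟨hTnd, hmid, hdisjT⟩ := hnodP
    rw [List.nodup_append] at hmid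
    obtain ⟨hD1t, hD2t, hdisj12⟩ := hmid
    have hyD1t : y ∈ D1.support.tail := by
      have hy : y ∈ D1.support := SimpleGraph.Walk.end_mem_support D1
      rw [SimpleGraph.Walk.support_eq_cons D1, List.mem_cons] at hy
      rcases hy with hy | hy
      · exact absurd hy.symm hxy.ne
      · assumption
    -- the shortcut walk
    set Q : G.Walk a b := T.append (SimpleGraph.Walk.cons hxy D2) with hQ
    have hsupQ : Q.support = T.support ++ (y :: D2.support.tail) := by
      rw [hQ, SimpleGraph.Walk.support_append, SimpleGraph.Walk.support_cons,
        List.tail_cons]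
      exact congrArg (T.support ++ ·) (SimpleGraph.Walk.support_eq_cons D2)
    have hQpath : Q.IsPath := by
      rw [SimpleGraph.Walk.isPath_def, hsupQ, List.nodup_append]
      refine ⟨hTnd, ?_, ?_⟩
      · rw [List.nodup_cons]
        exact ⟨fun hmem => hdisj12 y hyD1t y hmem rfl, hD2t⟩
      · intro z hzT w hz hzw
        subst hzw
        rcases List.mem_cons.mp hz with rfl | hz
        · exact hdisjT _ hzT _ (List.mem_append_left _ hyD1t) rfl
        · exact hdisjT _ hzT _ (List.mem_append_right _ hz) rfl
    have hsub : ∀ z ∈ Q.support, z ∈ (T.append (D1.append D2)).support := by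
      intro z hz
      rw [hsupQ] at hz
      rw [hsupP]
      rcases List.mem_append.mp hz with hz | hz
      · exact List.mem_append_left _ hz
      · rcases List.mem_cons.mp hz with rfl | hz
        · exact List.mem_append_right _ (List.mem_append_left _ hyD1t)
        · exact List.mem_append_right _ (List.mem_append_right _ hz)
    have hQlen : Q.length = T.length + (D2.length + 1) := by
      rw [hQ, SimpleGraph.Walk.length_append, SimpleGraph.Walk.length_cons]
    have hPlen : (T.append (D1.append D2)).length
        = T.length + (D1.length + D2.length) := by
      rw [SimpleGraph.Walk.length_append, SimpleGraph.Walk.length_append]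
    have hQav : IsCAvoidingPath G c Q := by
      refine ⟨hQpath, ?_, ?_⟩
      · intro z hz hza hzb
        exact hP.2.1 z (hsub z hz) hza hzb
      · intro h1
        exfalso
        have hT0 : T.length = 0 := by omega
        have hD20 : D2.length = 0 := by omega
        exact hab ⟨(SimpleGraph.Walk.eq_of_length_eq_zero hT0).symm,
          SimpleGraph.Walk.eq_of_length_eq_zero hD20⟩
    have := hmin Q hQav
    omega

end AuxLemmas

/-- In a hole-edge-disjoint graph, if `S_{C,e} ≠ ∅`, then any shortest
`C`-avoiding `(u,v)`-path has length exactly `2`. -/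
theorem shortest_C_avoiding_path_length_eq_two
    {V : Type u} (G : SimpleGraph V) (hhed : HoleEdgeDisjoint G)
    {v : V} (c : G.Walk v v) (hc : IsHole G c)
    {a b : V} (he : s(a, b) ∈ c.edges) (hS : (Sset G c a b).Nonempty)
    (P : G.Walk a b) (hP : IsCAvoidingPath G c P)
    (hmin : ∀ Q : G.Walk a b, IsCAvoidingPath G c Q → P.length ≤ Q.length) :
    P.length = 2 := by
  have hab : G.Adj a b := c.adj_of_mem_edges he
  have haS : a ∈ c.support := SimpleGraph.Walk.fst_mem_support_of_mem_edges c he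
  have hbS : b ∈ c.support := SimpleGraph.Walk.snd_mem_support_of_mem_edges c he
  have hPp := hP.1
  have h0 : P.length ≠ 0 := fun h => hab.ne (SimpleGraph.Walk.eq_of_length_eq_zero h)
  have h1 : P.length ≠ 1 := by
    intro h
    rcases hP.2.2 h with h' | h'
    · exact h' (Set.mem_union_left _ haS)
    · exact h' (Set.mem_union_left _ hbS)
  by_contra hne
  have h3 : 3 ≤ P.length := by omega
  obtain ⟨x1, hax1, q, hPq⟩ := SimpleGraph.Walk.exists_eq_cons_of_ne hab.ne P
  have hx1b : x1 ≠ b := by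
    intro h
    subst h
    have hq : q.IsPath := by
      rw [hPq, SimpleGraph.Walk.cons_isPath_iff] at hPp
      exact hPp.1
    have : q = SimpleGraph.Walk.nil := (SimpleGraph.Walk.isPath_iff_eq_nil).mp hq
    rw [hPq, this] at h3
    simp at h3
  have hanq : a ∉ q.support := by
    rw [hPq, SimpleGraph.Walk.cons_isPath_iff] at hPp
    exact hPp.2
  have hnot : s(b, a) ∉ P.edges := by
    intro hmem
    rw [hPq, SimpleGraph.Walk.edges_cons, List.mem_cons] at hmem
    rcases hmem with hmem | hmem
    · rw [Sym2.eq_iff] at hmem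
      rcases hmem with ⟨h', _⟩ | ⟨h', _⟩
      · exact hab.ne h'.symm
      · exact hx1b h'.symm
    · exact hanq (SimpleGraph.Walk.snd_mem_support_of_mem_edges q hmem)
  have key : ∀ x ∈ P.support, ∀ y ∈ P.support, G.Adj x y →
      s(x, y) ∈ P.edges ∨ (x = a ∧ y = b) ∨ (y = a ∧ x = b) := by
    intro x hx y hy hxy
    obtain ⟨T, D, hTD⟩ := SimpleGraph.Walk.mem_support_iff_exists_append.mp hx
    rw [hTD, SimpleGraph.Walk.mem_support_append_iff] at hy
    rcases hy with hy | hy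
    · -- y comes before x
      obtain ⟨T1, T2, hT12⟩ := SimpleGraph.Walk.mem_support_iff_exists_append.mp hy
      rw [hT12, ← SimpleGraph.Walk.append_assoc] at hTD
      rw [hTD] at hP hmin ⊢
      rcases aux_shortcut c T1 T2 D hP hmin hxy.symm with h | h
      · rw [Sym2.eq_swap] at h
        exact Or.inl h
      · exact Or.inr (Or.inr h)
    · -- x comes before y
      obtain ⟨D1, D2, hD12⟩ := SimpleGraph.Walk.mem_support_iff_exists_append.mp hy
      rw [hD12] at hTD
      rw [hTD] at hP hmin ⊢
      rcases aux_shortcut c T D1 D2 hP hmin hxy with h | h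
      · exact Or.inl h
      · exact Or.inr (Or.inl h)
  have hWhole : IsHole G (SimpleGraph.Walk.cons hab.symm P) := by
    refine ⟨?_, ?_, ?_⟩
    · rw [SimpleGraph.Walk.cons_isCycle_iff]
      exact ⟨hP.1, hnot⟩
    · rw [SimpleGraph.Walk.length_cons]
      omega
    · intro x hx y hy hxy
      rw [SimpleGraph.Walk.support_cons] at hx hy
      have hx' : x ∈ P.support := by
        rcases List.mem_cons.mp hx with rfl | hx
        · exact SimpleGraph.Walk.end_mem_support P
        · exact hx
      have hy' : y ∈ P.support := by
        rcases List.mem_cons.mp hy with rfl | hy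
        · exact SimpleGraph.Walk.end_mem_support P
        · exact hy
      rw [SimpleGraph.Walk.edges_cons]
      rcases key x hx' y hy' hxy with h | ⟨rfl, rfl⟩ | ⟨rfl, rfl⟩
      · exact List.mem_cons_of_mem _ h
      · rw [Sym2.eq_swap]
        exact List.mem_cons_self
      · exact List.mem_cons_self
  rcases hhed v b c (SimpleGraph.Walk.cons hab.symm P) hc hWhole with heq | hdisj
  · have he1 : s(a, x1) ∈ (SimpleGraph.Walk.cons hab.symm P).edges := by
      rw [SimpleGraph.Walk.edges_cons, hPq, SimpleGraph.Walk.edges_cons]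
      exact List.mem_cons_of_mem _ (List.mem_cons_self)
    have he2 : s(a, x1) ∈ c.edges := (Set.ext_iff.mp heq s(a, x1)).mpr he1
    have hx1c : x1 ∈ c.support := SimpleGraph.Walk.snd_mem_support_of_mem_edges c he2
    have hx1P : x1 ∈ P.support := by
      rw [hPq, SimpleGraph.Walk.support_cons]
      exact List.mem_cons_of_mem _ (SimpleGraph.Walk.start_mem_support q)
    exact hP.2.1 x1 hx1P hax1.ne' hx1b (Set.mem_union_left _ hx1c)
  · refine hdisj s(a, b) he ?_
    rw [SimpleGraph.Walk.edges_cons, Sym2.eq_swap]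
    exact List.mem_cons_self
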